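/- Let F be the free group on μ generators x_1, …, x_μ. Call a tuple (w_1, …, w_μ) ∈ F^μ a free generating system if there is an automorphism φ of F with φ(x_i) = w_i for all i. Let (ω_1, …, ω_μ) and (ω'_1, …, ω'_μ) be two free generating systems of F such that ω_i is conjugate to ω'_i in F for each i = 1, …, μ. Then (ω'_1, …, ω'_μ) can be obtained from (ω_1, …, ω_μ) by a finite sequence of elementary moves, where an elementary move with indices i ≠ j replaces ω_j by ω_i^{-1} ω_j ω_i (operation α_i(j)) or by ω_i ω_j ω_i^{-1} (operation β_i(j)) and leaves all other entries unchanged. -/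

import Mathlib

namespace HumphriesAux
open FreeGroup List

variable {α : Type*} [DecidableEq α]

set_option linter.unusedSectionVars false

/-- A word is reduced if no adjacent pair of letters cancels. -/
def Reduced (L : List (α × Bool)) : Prop :=
  List.Chain' (fun s t => ¬(s.1 = t.1 ∧ s.2 = !t.2)) L

theorem reduced_reduce (L : List (α × Bool)) : Reduced (reduce L) := by
  induction L with
  | nil => simp [Reduced, List.Chain']
  | cons x L ih =>
    rw [FreeGroup.reduce.cons]
    rcases h : reduce L with _ | ⟨hd, tl⟩
    · simp [Reduced, List.Chain']
    · rw [h] at ih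
      show Reduced (if x.1 = hd.1 ∧ x.2 = !hd.2 then tl else x :: hd :: tl)
      by_cases hc : x.1 = hd.1 ∧ x.2 = !hd.2
      · rw [if_pos hc]; exact ih.tail
      · rw [if_neg hc]; exact List.isChain_cons_cons.2 ⟨hc, ih⟩

theorem Reduced.reduce_eq {L : List (α × Bool)} (h : Reduced L) : reduce L = L := by
  induction L with
  | nil => rfl
  | cons x L ih =>
    have hL : Reduced L := h.tail
    rw [FreeGroup.reduce.cons, ih hL]
    rcases hL' : L with _ | ⟨hd, tl⟩
    · rfl
    · show (if x.1 = hd.1 ∧ x.2 = !hd.2 then tl else x :: hd :: tl) = _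
      have : ¬(x.1 = hd.1 ∧ x.2 = !hd.2) := by
        rw [hL'] at h
        exact (List.isChain_cons_cons.1 h).1
      rw [if_neg this]

theorem reduced_toWord (x : FreeGroup α) : Reduced (toWord x) := by
  rw [← FreeGroup.reduce_toWord]
  exact reduced_reduce _

theorem toWord_mk_of_reduced {L : List (α × Bool)} (h : Reduced L) : (mk L).toWord = L :=
  FreeGroup.toWord_mk.trans h.reduce_eq

theorem norm_mk_of_reduced {L : List (α × Bool)} (h : Reduced L) : norm (mk L) = L.length := by
  rw [FreeGroup.norm, toWord_mk_of_reduced h]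

theorem invRev_append' (L₁ L₂ : List (α × Bool)) :
    invRev (L₁ ++ L₂) = invRev L₂ ++ invRev L₁ := by
  simp [invRev]

theorem invRev_singleton (s : α × Bool) : invRev [s] = [(s.1, !s.2)] := by
  simp [invRev]

theorem head?_invRev (L : List (α × Bool)) :
    (invRev L).head? = L.getLast?.map (fun s => (s.1, !s.2)) := by
  simp [invRev, List.head?_reverse, List.getLast?_map]

theorem getLast?_invRev (L : List (α × Bool)) :
    (invRev L).getLast? = L.head?.map (fun s => (s.1, !s.2)) := by
  simp [invRev, List.getLast?_reverse, List.head?_map]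

theorem invRev_eq_nil_iff {L : List (α × Bool)} : invRev L = [] ↔ L = [] := by
  constructor
  · intro h
    have := congrArg List.length h
    simpa [FreeGroup.invRev_length] using this
  · rintro rfl; rfl

theorem reduced_invRev {L : List (α × Bool)} (h : Reduced L) : Reduced (invRev L) := by
  have : invRev L = reduce (invRev L) := by rw [FreeGroup.reduce_invRev, h.reduce_eq]
  rw [this]
  exact reduced_reduce _

theorem Reduced.append_left {L₁ L₂ : List (α × Bool)} (h : Reduced (L₁ ++ L₂)) : Reduced L₁ :=
  (List.isChain_append.1 h).1

theorem Reduced.append_right {L₁ L₂ : List (α × Bool)} (h : Reduced (L₁ ++ L₂)) : Reduced L₂ :=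
  (List.isChain_append.1 h).2.1

/-- longest common prefix decomposition -/
theorem exists_common_prefix {β : Type*} [DecidableEq β] (X Y : List β) :
    ∃ C X' Y', X = C ++ X' ∧ Y = C ++ Y' ∧ (X' = [] ∨ Y' = [] ∨ X'.head? ≠ Y'.head?) := by
  induction X generalizing Y with
  | nil => exact ⟨[], [], Y, rfl, rfl, Or.inl rfl⟩
  | cons x X ih =>
    rcases Y with _ | ⟨y, Y⟩
    · exact ⟨[], x :: X, [], rfl, rfl, Or.inr (Or.inl rfl)⟩
    · by_cases hxy : x = y
      · subst hxy
        obtain ⟨C, X', Y', h1, h2, h3⟩ := ih Y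
        exact ⟨x :: C, X', Y', by simp [h1], by simp [h2], h3⟩
      · exact ⟨[], x :: X, y :: Y, rfl, rfl, Or.inr (Or.inr (by simp [hxy]))⟩



/-- Normal form: `g = u * of i * u⁻¹` with the conjugator `u` not ending in `i^±1`. -/
def NF (i : α) (u g : FreeGroup α) : Prop :=
  g = u * of i * u⁻¹ ∧ ∀ p ∈ u.toWord.getLast?, p.1 ≠ i

theorem NF.reduced_word (i : α) (u : FreeGroup α) (h : ∀ p ∈ u.toWord.getLast?, p.1 ≠ i)
    (b : Bool) : Reduced (u.toWord ++ (i, b) :: invRev u.toWord) := by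
  have hU : Reduced u.toWord := reduced_toWord u
  have hUr : Reduced (invRev u.toWord) := reduced_invRev hU
  have : (i, b) :: invRev u.toWord = [(i,b)] ++ invRev u.toWord := rfl
  rw [this, ← List.append_assoc]
  rw [Reduced]; unfold List.Chain'; rw [List.isChain_append]
  refine ⟨?_, hUr, ?_⟩
  · rw [List.isChain_append]
    refine ⟨hU, List.isChain_singleton _, ?_⟩
    intro x hx y hy
    simp only [List.head?, Option.mem_def, Option.some.injEq] at hy
    subst hy
    exact fun hc => h x hx hc.1
  · intro x hx y hy
    rw [List.getLast?_append, Option.mem_def] at hx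
    simp only [List.getLast?_singleton, Option.or_some, Option.some_or, Option.some.injEq] at hx
    subst hx
    rw [head?_invRev, Option.mem_def, Option.map_eq_some_iff] at hy
    obtain ⟨p, hp, rfl⟩ := hy
    exact fun hc => h p hp hc.1.symm

theorem NF.toWord_pm {i : α} {u g : FreeGroup α} (h : NF i u g) (b : Bool) :
    toWord (cond b g g⁻¹) = u.toWord ++ (i, b) :: invRev u.toWord := by
  obtain ⟨rfl, hlast⟩ := h
  have hred := NF.reduced_word i u hlast b
  have hmk : (cond b (u * of i * u⁻¹) (u * of i * u⁻¹)⁻¹)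
      = mk (u.toWord ++ (i, b) :: invRev u.toWord) := by
    have hu : u = mk u.toWord := (FreeGroup.mk_toWord).symm
    have hof : (of i : FreeGroup α) = mk [(i, true)] := rfl
    have hofinv : ((of i)⁻¹ : FreeGroup α) = mk [(i, false)] := rfl
    cases b with
    | true =>
      conv_lhs => rw [show cond true (u * of i * u⁻¹) (u * of i * u⁻¹)⁻¹ = u * of i * u⁻¹ from rfl]
      rw [hu, hof, FreeGroup.inv_mk, FreeGroup.mul_mk, FreeGroup.mul_mk]
      simp
    | false =>
      have : (u * of i * u⁻¹)⁻¹ = u * (of i)⁻¹ * u⁻¹ := by group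
      conv_lhs => rw [show cond false (u * of i * u⁻¹) (u * of i * u⁻¹)⁻¹ = (u * of i * u⁻¹)⁻¹ from rfl, this]
      rw [hu, hofinv, FreeGroup.inv_mk, FreeGroup.mul_mk, FreeGroup.mul_mk]
      simp
  rw [hmk, toWord_mk_of_reduced hred]

theorem NF.toWord {i : α} {u g : FreeGroup α} (h : NF i u g) :
    g.toWord = u.toWord ++ (i, true) :: invRev u.toWord := h.toWord_pm true

theorem NF.norm_eq {i : α} {u g : FreeGroup α} (h : NF i u g) :
    norm g = 2 * norm u + 1 := by
  rw [FreeGroup.norm, h.toWord]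
  simp [FreeGroup.norm, FreeGroup.invRev_length]
  omega

theorem exists_NF {i : α} {g : FreeGroup α} (h : IsConj (of i) g) : ∃ u, NF i u g := by
  obtain ⟨c, hc⟩ := isConj_iff.1 h
  have hg : g = c * of i * c⁻¹ := hc.symm
  clear hc h
  -- strong induction on norm of the conjugator
  obtain ⟨n, hn⟩ : ∃ n, norm c ≤ n := ⟨norm c, le_rfl⟩
  induction n generalizing c g with
  | zero =>
    refine ⟨c, hg, ?_⟩
    have : norm c = 0 := Nat.le_zero.1 hn
    rw [FreeGroup.norm, List.length_eq_zero_iff] at this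
    simp [this]
  | succ n ih =>
    by_cases hl : ∀ p ∈ c.toWord.getLast?, p.1 ≠ i
    · exact ⟨c, hg, hl⟩
    · push_neg at hl
      obtain ⟨p, hp, hpi⟩ := hl
      have hcne : c.toWord ≠ [] := by
        intro hnil; rw [hnil] at hp; simp at hp
      have hsplit : c.toWord = c.toWord.dropLast ++ [p] := by
        rw [Option.mem_def] at hp
        conv_lhs => rw [← List.dropLast_append_getLast hcne]
        rw [List.getLast?_eq_getLast hcne, Option.some.injEq] at hp
        rw [hp]
      set c' : FreeGroup α := mk c.toWord.dropLast with hc'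
      have hred' : Reduced c.toWord.dropLast := by
        have := reduced_toWord c
        rw [hsplit] at this
        exact this.append_left
      have hcc : c = c' * mk [p] := by
        conv_lhs => rw [← FreeGroup.mk_toWord (x := c), hsplit]
        rw [hc', FreeGroup.mul_mk]
      have hpcomm : mk [p] * of i * (mk [p])⁻¹ = of i := by
        rcases p with ⟨a, b⟩
        simp only at hpi
        rw [hpi]
        cases b with
        | true =>
          rw [show (mk [(i, true)] : FreeGroup α) = of i from rfl]
          group
        | false =>
          rw [show (mk [(i, false)] : FreeGroup α) = (of i)⁻¹ from rfl]
          group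
      have hg' : g = c' * of i * c'⁻¹ := by
        rw [hg, hcc]
        rw [show c' * mk [p] * of i * (c' * mk [p])⁻¹
            = c' * (mk [p] * of i * (mk [p])⁻¹) * c'⁻¹ by group, hpcomm]
      refine ih c' hg' ?_
      have hnc : norm c = norm c' + 1 := by
        rw [FreeGroup.norm, hc', norm_mk_of_reduced hred']
        conv_lhs => rw [hsplit]
        simp
      omega

end HumphriesAux

namespace HumphriesAux
open FreeGroup List
variable {α : Type*} [DecidableEq α]
set_option linter.unusedSectionVars false

/-- The "folded" condition: no `u i · i^{±1}` is a prefix of `u j`. -/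
def FoldedCond (u : α → FreeGroup α) : Prop :=
  ∀ i j, i ≠ j → ∀ b : Bool, ¬ ((u i).toWord ++ [(i, b)]) <+: (u j).toWord

theorem lift_letter (w : α → FreeGroup α) (i : α) (ε : Bool) :
    FreeGroup.lift w (mk [(i, ε)]) = cond ε (w i) (w i)⁻¹ := by
  cases ε with
  | true => exact FreeGroup.lift_apply_of
  | false =>
    rw [show (mk [(i, false)] : FreeGroup α) = (of i)⁻¹ from rfl, _root_.map_inv, FreeGroup.lift_apply_of]
    rfl

theorem sinv (w u : α → FreeGroup α) (hNF : ∀ i, NF i (u i) (w i)) (hF : FoldedCond u) :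
    ∀ n (σ : List (α × Bool)), σ.length ≤ n → Reduced σ →
      σ = [] ∨ ∃ P j c, σ.getLast? = some (j, c) ∧
        (FreeGroup.lift w (mk σ)).toWord = P ++ (j, c) :: invRev (u j).toWord := by
  intro n
  induction n with
  | zero =>
    intro σ hlen _
    left
    exact List.length_eq_zero_iff.1 (Nat.le_zero.1 hlen)
  | succ n ih =>
    intro σ hlen hred
    by_cases hne : σ = []
    · exact Or.inl hne
    right
    obtain ⟨τ, q, rfl⟩ : ∃ τ q, σ = τ ++ [q] :=
      ⟨σ.dropLast, σ.getLast hne, (List.dropLast_append_getLast hne).symm⟩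
    obtain ⟨i, ε⟩ := q
    have hlast : (τ ++ [(i, ε)]).getLast? = some (i, ε) := List.getLast?_concat
    have hτred : Reduced τ := hred.append_left
    have hτlen : τ.length ≤ n := by
      have := hlen; simp at this; omega
    have hmkσ : (mk (τ ++ [(i, ε)]) : FreeGroup α) = mk τ * mk [(i, ε)] :=
      (FreeGroup.mul_mk).symm
    have hwiε : FreeGroup.lift w (mk [(i, ε)]) = cond ε (w i) (w i)⁻¹ := lift_letter w i ε
    have hwiεword : (cond ε (w i) (w i)⁻¹).toWord
        = (u i).toWord ++ (i, ε) :: invRev (u i).toWord := (hNF i).toWord_pm ε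
    rcases ih τ hτlen hτred with hτnil | ⟨P, j, c, hτlast, hτword⟩
    · -- base : single letter
      subst hτnil
      refine ⟨(u i).toWord, i, ε, hlast, ?_⟩
      rw [hmkσ, _root_.map_mul, hwiε]
      rw [show (mk ([] : List (α × Bool)) : FreeGroup α) = 1 from rfl, _root_.map_one, one_mul]
      exact hwiεword
    · -- inductive step
      set gτ := FreeGroup.lift w (mk τ) with hgτ
      obtain ⟨C, X', Y', hXj, hYi, hdis⟩ :=
        exists_common_prefix (u j).toWord (u i).toWord
      set A : List (α × Bool) := P ++ (j, c) :: invRev X' with hA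
      set B : List (α × Bool) := Y' ++ (i, ε) :: invRev (u i).toWord with hB
      have hinvUj : invRev (u j).toWord = invRev X' ++ invRev C := by
        rw [hXj, invRev_append']
      have hgτword : gτ.toWord = A ++ invRev C := by
        rw [hτword, hinvUj, hA]; simp
      have hwword : (cond ε (w i) (w i)⁻¹).toWord = C ++ B := by
        rw [hwiεword, hB, hYi]
        simp
      -- (1) the product is mk (A ++ B)
      have hprod : FreeGroup.lift w (mk (τ ++ [(i, ε)])) = mk (A ++ B) := by
        rw [hmkσ, _root_.map_mul, hwiε, ← hgτ]
        have h1 : gτ = mk A * (mk C)⁻¹ := by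
          conv_lhs => rw [← FreeGroup.mk_toWord (x := gτ), hgτword]
          rw [FreeGroup.inv_mk, FreeGroup.mul_mk]
        have h2 : (cond ε (w i) (w i)⁻¹) = mk C * mk B := by
          conv_lhs => rw [← FreeGroup.mk_toWord (x := cond ε (w i) (w i)⁻¹), hwword]
          rw [FreeGroup.mul_mk]
        rw [h1, h2, mul_assoc, ← mul_assoc ((mk C)⁻¹), inv_mul_cancel, one_mul,
          FreeGroup.mul_mk]
      -- (2) A ++ B is reduced
      have hredA : Reduced A := by
        have := reduced_toWord gτ
        rw [hgτword] at this
        exact this.append_left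
      have hredB : Reduced B := by
        have := reduced_toWord (cond ε (w i) (w i)⁻¹)
        rw [hwword] at this
        exact this.append_right
      have hXY : i = j → X' = Y' := by
        rintro rfl
        rw [hXj] at hYi
        exact (List.append_cancel_left hYi)
      have hjunc : ∀ x ∈ A.getLast?, ∀ y ∈ B.head?, ¬(x.1 = y.1 ∧ x.2 = !y.2) := by
        intro x hx y hy
        rcases hX' : X' with _ | ⟨xh, X''⟩
        · -- A ends with (j, c)
          obtain rfl : (j, c) = x := by
            rw [hA, hX', FreeGroup.invRev_empty, List.getLast?_concat] at hx
            simpa using hx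
          rcases hY' : Y' with _ | ⟨yh, Y''⟩
          · -- B starts with (i, ε) : use reducedness of σ at the junction
            obtain rfl : (i, ε) = y := by
              rw [hB, hY'] at hy
              simpa using hy
            have hj2 := (List.isChain_append.1 hred).2.2
            exact hj2 (j, c) (by rw [hτlast]; rfl) (i, ε) rfl
          · -- B starts with yh : use the folded condition
            obtain rfl : yh = y := by
              rw [hB, hY'] at hy
              simpa using hy
            rintro ⟨h1, h2⟩
            have h2' : c = !yh.2 := h2
            have hyh : yh = (j, !c) := Prod.ext h1.symm (by rw [h2', Bool.not_not])
            have hij : i ≠ j := by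
              rintro rfl
              rw [hXY rfl] at hX'
              rw [hX'] at hY'
              exact List.cons_ne_nil _ _ hY'.symm
            refine hF j i (Ne.symm hij) (!c) ⟨Y'', ?_⟩
            rw [hYi, hXj, hX', List.append_nil, hY', hyh]
            simp
        · -- A ends with the inverse of xh, the first letter of X'
          obtain rfl : (xh.1, !xh.2) = x := by
            have hgl : (invRev X').getLast? = some (xh.1, !xh.2) := by
              rw [getLast?_invRev, hX']
              rfl
            rw [hA] at hx
            rw [show ((j, c) :: invRev X' : List (α × Bool)) = [(j, c)] ++ invRev X' from rfl,
              ← List.append_assoc, List.getLast?_append, hgl] at hx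
            simpa using hx
          rcases hY' : Y' with _ | ⟨yh, Y''⟩
          · -- B starts with (i, ε) : folded condition the other way
            obtain rfl : (i, ε) = y := by
              rw [hB, hY'] at hy
              simpa using hy
            rintro ⟨h1, h2⟩
            have hxh : xh = (i, ε) := Prod.ext h1 (by simpa using congrArg (fun b => !b) h2)
            have hij : i ≠ j := by
              rintro rfl
              rw [← hXY rfl] at hY'
              rw [hY'] at hX'
              exact List.cons_ne_nil _ _ hX'.symm
            refine hF i j hij ε ⟨X'', ?_⟩
            rw [hXj, hYi, hY', List.append_nil, hX', hxh]
            simp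
          · -- both nonempty : heads disagree
            obtain rfl : yh = y := by
              rw [hB, hY'] at hy
              simpa using hy
            rintro ⟨h1, h2⟩
            have : xh = yh := Prod.ext h1 (by simpa using congrArg (fun b => !b) h2)
            rcases hdis with hd | hd | hd
            · rw [hX'] at hd; exact List.cons_ne_nil _ _ hd
            · rw [hY'] at hd; exact List.cons_ne_nil _ _ hd
            · rw [hX', hY', this] at hd
              exact hd rfl
      have hredAB : Reduced (A ++ B) := List.isChain_append.2 ⟨hredA, hredB, hjunc⟩
      refine ⟨P ++ (j, c) :: (invRev X' ++ Y'), i, ε, hlast, ?_⟩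
      rw [hprod, toWord_mk_of_reduced hredAB, hA, hB]
      simp

end HumphriesAux

namespace HumphriesAux
open FreeGroup List
variable {α : Type*} [DecidableEq α]
set_option linter.unusedSectionVars false

theorem folded_eq (w u : α → FreeGroup α) (hNF : ∀ i, NF i (u i) (w i)) (hF : FoldedCond u)
    (hsurj : Function.Surjective (FreeGroup.lift w : FreeGroup α →* FreeGroup α)) :
    ∀ k, w k = of k := by
  intro k
  obtain ⟨x, hx⟩ := hsurj (of k)
  have hs := sinv w u hNF hF x.toWord.length x.toWord le_rfl (reduced_toWord x)
  rw [FreeGroup.mk_toWord] at hs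
  rcases hs with hnil | ⟨P, j, c, hlast, hword⟩
  · rw [FreeGroup.toWord_eq_nil_iff] at hnil
    rw [hnil, _root_.map_one] at hx
    exact absurd hx (FreeGroup.one_ne_of k)
  · rw [hx, FreeGroup.toWord_of] at hword
    have hlen := congrArg List.length hword
    simp [FreeGroup.invRev_length] at hlen
    have hP : P = [] := List.length_eq_zero_iff.1 (by omega)
    have hU : (u j).toWord.length = 0 := by omega
    have hUnil : (u j).toWord = [] := List.length_eq_zero_iff.1 hU
    rw [hP, List.nil_append, hUnil, FreeGroup.invRev_empty] at hword
    have hjk : (k, true) = (j, c) := by simpa using hword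
    obtain ⟨rfl, -⟩ : k = j ∧ True := ⟨congrArg Prod.fst hjk, trivial⟩
    have hu1 : u k = 1 := FreeGroup.toWord_eq_nil_iff.1 hUnil
    rw [(hNF k).1, hu1]
    group

end HumphriesAux

/-- An elementary move on `μ`-tuples of elements of the free group: for `i ≠ j`, replace
the `j`-th entry `w j` by `(w i)⁻¹ * w j * w i` (operation `α_i(j)`) or by
`w i * w j * (w i)⁻¹` (operation `β_i(j)`), leaving all other entries unchanged. -/
def elemConjMove (μ : ℕ) (w w' : Fin μ → FreeGroup (Fin μ)) : Prop :=
  ∃ i j : Fin μ, i ≠ j ∧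
    (w' = Function.update w j ((w i)⁻¹ * w j * w i) ∨
     w' = Function.update w j (w i * w j * (w i)⁻¹))

namespace HumphriesAux
open FreeGroup List

theorem elemConjMove_symm {μ : ℕ} : Symmetric (elemConjMove μ) := by
  rintro w w' ⟨i, j, hij, h | h⟩ <;>
    [refine ⟨i, j, hij, Or.inr ?_⟩; refine ⟨i, j, hij, Or.inl ?_⟩] <;>
  · subst h
    funext k
    by_cases hk : k = j
    · subst hk
      simp only [Function.update_self, Function.update_of_ne hij]
      group
    · simp only [Function.update_of_ne hk]

theorem elemConjMove_map {μ : ℕ} (φ : FreeGroup (Fin μ) ≃* FreeGroup (Fin μ))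
    {w w' : Fin μ → FreeGroup (Fin μ)} (h : elemConjMove μ w w') :
    elemConjMove μ (fun k => φ (w k)) (fun k => φ (w' k)) := by
  obtain ⟨i, j, hij, h | h⟩ := h <;> [refine ⟨i, j, hij, Or.inl ?_⟩; refine ⟨i, j, hij, Or.inr ?_⟩] <;>
  · subst h
    funext k
    by_cases hk : k = j
    · subst hk
      simp [Function.update_self]
    · simp [Function.update_of_ne hk]

/-- The key reduction: a componentwise-conjugate-to-basis generating tuple can be moved
to the standard tuple. -/
theorem main_reduction (μ : ℕ) :
    ∀ N (w : Fin μ → FreeGroup (Fin μ)),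
      (∑ i, FreeGroup.norm (w i)) ≤ N →
      (∃ ψ : FreeGroup (Fin μ) ≃* FreeGroup (Fin μ), ∀ i, ψ (FreeGroup.of i) = w i) →
      (∀ i, IsConj (FreeGroup.of i) (w i)) →
      Relation.ReflTransGen (elemConjMove μ) w (fun i => FreeGroup.of i) := by
  intro N
  induction N with
  | zero =>
    intro w hsum hψ hconj
    have hw : w = fun i => FreeGroup.of i := by
      funext i
      have h0 : FreeGroup.norm (w i) = 0 :=
        Finset.sum_eq_zero_iff.1 (Nat.le_zero.1 hsum) i (Finset.mem_univ i)
      rw [FreeGroup.norm_eq_zero] at h0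
      have hc := hconj i
      rw [h0] at hc
      exact absurd (isConj_one_left.1 hc) (FreeGroup.of_ne_one i)
    rw [hw]
  | succ N ih =>
    intro w hsum hψ hconj
    -- choose normal forms
    choose u hu using fun i => exists_NF (hconj i)
    by_cases hF : FoldedCond u
    · -- folded: the tuple is the standard one
      obtain ⟨ψ, hψ0⟩ := hψ
      have heq : (FreeGroup.lift w : FreeGroup (Fin μ) →* FreeGroup (Fin μ)) = ψ.toMonoidHom :=
        FreeGroup.ext_hom _ _ (fun a => by rw [FreeGroup.lift_apply_of]; exact (hψ0 a).symm)
      have hsurj : Function.Surjective (FreeGroup.lift w : FreeGroup (Fin μ) →* FreeGroup (Fin μ)) := by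
        intro y
        exact ⟨ψ.symm y, by rw [heq]; simp⟩
      have hw : w = fun i => FreeGroup.of i := funext (folded_eq w u hu hF hsurj)
      rw [hw]
    · -- not folded: an elementary move strictly decreases total length
      simp only [FoldedCond, not_forall] at hF
      obtain ⟨i, j, hij, b, hpre⟩ := hF
      rw [not_not] at hpre
      obtain ⟨V, hV⟩ := hpre
      have hwi := (hu i).1
      have hwj := (hu j).1
      have huj : u j = u i * mk [(i, b)] * mk V := by
        conv_lhs => rw [← FreeGroup.mk_toWord (x := u j), ← hV]
        rw [← FreeGroup.mul_mk, ← FreeGroup.mul_mk]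
        rw [FreeGroup.mk_toWord]
      set v : FreeGroup (Fin μ) := u i * mk V with hv
      set g : FreeGroup (Fin μ) := cond b ((w i)⁻¹ * w j * w i) (w i * w j * (w i)⁻¹) with hgdef
      have hg : g = v * FreeGroup.of j * v⁻¹ := by
        cases b with
        | true =>
          show (w i)⁻¹ * w j * w i = v * FreeGroup.of j * v⁻¹
          rw [hwj, hwi, huj, hv, show (mk [(i, true)] : FreeGroup (Fin μ)) = FreeGroup.of i from rfl]
          group
        | false =>
          show w i * w j * (w i)⁻¹ = v * FreeGroup.of j * v⁻¹
          rw [hwj, hwi, huj, hv, show (mk [(i, false)] : FreeGroup (Fin μ)) = (FreeGroup.of i)⁻¹ from rfl]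
          group
      -- length decrease
      have hnv : FreeGroup.norm v ≤ FreeGroup.norm (u i) + V.length := by
        calc FreeGroup.norm v ≤ FreeGroup.norm (u i) + FreeGroup.norm (mk V) :=
              FreeGroup.norm_mul_le _ _
        _ ≤ FreeGroup.norm (u i) + V.length := by
              have := FreeGroup.norm_mk_le (L₁ := V) (α := Fin μ)
              omega
      have hnuj : FreeGroup.norm (u j) = FreeGroup.norm (u i) + 1 + V.length := by
        rw [FreeGroup.norm, FreeGroup.norm, ← hV]
        simp
        omega
      have hng : FreeGroup.norm g < FreeGroup.norm (w j) := by
        have h1 : FreeGroup.norm g ≤ 2 * FreeGroup.norm v + 1 := by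
          calc FreeGroup.norm g ≤ FreeGroup.norm (v * FreeGroup.of j) + FreeGroup.norm v⁻¹ := by
                rw [hg]
                exact FreeGroup.norm_mul_le _ _
          _ ≤ FreeGroup.norm v + FreeGroup.norm (FreeGroup.of j) + FreeGroup.norm v := by
                have h2 := FreeGroup.norm_mul_le v (FreeGroup.of j)
                rw [FreeGroup.norm_inv_eq]
                omega
          _ = 2 * FreeGroup.norm v + 1 := by rw [FreeGroup.norm_of]; ring
        have h3 : FreeGroup.norm (w j) = 2 * FreeGroup.norm (u j) + 1 := (hu j).norm_eq
        omega
      set w' := Function.update w j g with hw'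
      have hmove : elemConjMove μ w w' := by
        refine ⟨i, j, hij, ?_⟩
        cases b with
        | true => exact Or.inl (by rw [hw', hgdef]; rfl)
        | false => exact Or.inr (by rw [hw', hgdef]; rfl)
      -- new sum
      have hsum' : (∑ k, FreeGroup.norm (w' k)) ≤ N := by
        have h1 : (∑ k, FreeGroup.norm (w' k))
            = FreeGroup.norm g + ∑ k ∈ Finset.univ \ {j}, FreeGroup.norm (w k) := by
          rw [hw']
          rw [show (∑ k, FreeGroup.norm (Function.update w j g k))
              = ∑ k, (fun t => FreeGroup.norm t) (Function.update w j g k) from rfl]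
          rw [← Finset.sum_update_of_mem (Finset.mem_univ j) (fun k => FreeGroup.norm (w k))]
          congr 1
          funext k
          by_cases hk : k = j
          · subst hk; simp
          · simp [Function.update_of_ne hk]
        have h2 : (∑ k, FreeGroup.norm (w k))
            = FreeGroup.norm (w j) + ∑ k ∈ Finset.univ \ {j}, FreeGroup.norm (w k) := by
          rw [Finset.sdiff_singleton_eq_erase]
          exact (Finset.add_sum_erase _ _ (Finset.mem_univ j)).symm
        omega
      -- new hypotheses
      have hψ' : ∃ ψ : FreeGroup (Fin μ) ≃* FreeGroup (Fin μ), ∀ k, ψ (FreeGroup.of k) = w' k := by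
        obtain ⟨ψ, hψ0⟩ := hψ
        set a : FreeGroup (Fin μ) := cond b (FreeGroup.of i) (FreeGroup.of i)⁻¹ with ha
        set f : Fin μ → FreeGroup (Fin μ) := fun k => if k = j then a⁻¹ * FreeGroup.of k * a else FreeGroup.of k with hf
        set f' : Fin μ → FreeGroup (Fin μ) := fun k => if k = j then a * FreeGroup.of k * a⁻¹ else FreeGroup.of k with hf'
        have hfj : f j = a⁻¹ * FreeGroup.of j * a := by rw [hf]; simp
        have hfk : ∀ k, k ≠ j → f k = FreeGroup.of k := by
          intro k hk; rw [hf]; simp [hk]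
        have hf'j : f' j = a * FreeGroup.of j * a⁻¹ := by rw [hf']; simp
        have hf'k : ∀ k, k ≠ j → f' k = FreeGroup.of k := by
          intro k hk; rw [hf']; simp [hk]
        have hfi : FreeGroup.lift f (FreeGroup.of i) = FreeGroup.of i := by
          rw [FreeGroup.lift_apply_of, hfk i hij]
        have hf'i : FreeGroup.lift f' (FreeGroup.of i) = FreeGroup.of i := by
          rw [FreeGroup.lift_apply_of, hf'k i hij]
        have hfa : FreeGroup.lift f a = a := by
          cases b with
          | true => simpa [ha] using hfi
          | false => rw [ha]; show FreeGroup.lift f (FreeGroup.of i)⁻¹ = (FreeGroup.of i)⁻¹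
                     rw [_root_.map_inv, hfi]
        have hf'a : FreeGroup.lift f' a = a := by
          cases b with
          | true => simpa [ha] using hf'i
          | false => rw [ha]; show FreeGroup.lift f' (FreeGroup.of i)⁻¹ = (FreeGroup.of i)⁻¹
                     rw [_root_.map_inv, hf'i]
        have hcomp1 : (FreeGroup.lift f').comp (FreeGroup.lift f) = MonoidHom.id _ := by
          refine FreeGroup.ext_hom _ _ (fun k => ?_)
          simp only [MonoidHom.comp_apply, MonoidHom.id_apply, FreeGroup.lift_apply_of]
          by_cases hk : k = j
          · subst hk
            rw [hfj, _root_.map_mul, _root_.map_mul, _root_.map_inv, hf'a, FreeGroup.lift_apply_of, hf'j]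
            group
          · rw [hfk k hk, FreeGroup.lift_apply_of, hf'k k hk]
        have hcomp2 : (FreeGroup.lift f).comp (FreeGroup.lift f') = MonoidHom.id _ := by
          refine FreeGroup.ext_hom _ _ (fun k => ?_)
          simp only [MonoidHom.comp_apply, MonoidHom.id_apply, FreeGroup.lift_apply_of]
          by_cases hk : k = j
          · subst hk
            rw [hf'j, _root_.map_mul, _root_.map_mul, _root_.map_inv, hfa, FreeGroup.lift_apply_of, hfj]
            group
          · rw [hf'k k hk, FreeGroup.lift_apply_of, hfk k hk]
        set e : FreeGroup (Fin μ) ≃* FreeGroup (Fin μ) :=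
          MonoidHom.toMulEquiv (FreeGroup.lift f) (FreeGroup.lift f') hcomp1 hcomp2 with he
        have hea : ∀ x, e x = FreeGroup.lift f x := fun x => rfl
        have hψa : ψ a = cond b (w i) (w i)⁻¹ := by
          cases b with
          | true => simpa [ha] using hψ0 i
          | false => rw [ha]; show ψ (FreeGroup.of i)⁻¹ = (w i)⁻¹
                     rw [_root_.map_inv, hψ0 i]
        refine ⟨e.trans ψ, fun k => ?_⟩
        rw [MulEquiv.trans_apply, hea, FreeGroup.lift_apply_of]
        by_cases hk : k = j
        · subst hk
          rw [hfj]
          rw [_root_.map_mul, _root_.map_mul, _root_.map_inv, hψa, hψ0 k, hw']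
          rw [Function.update_self, hgdef]
          cases b with
          | true => rfl
          | false => show (w i)⁻¹⁻¹ * w k * (w i)⁻¹ = w i * w k * (w i)⁻¹; rw [inv_inv]
        · rw [hfk k hk, hψ0 k, hw', Function.update_of_ne hk]
      have hconj' : ∀ k, IsConj (FreeGroup.of k) (w' k) := by
        intro k
        by_cases hk : k = j
        · subst hk
          rw [hw', Function.update_self]
          refine (hconj k).trans (isConj_iff.2 ?_)
          cases b with
          | true => exact ⟨(w i)⁻¹, by rw [hgdef, inv_inv]; rfl⟩
          | false => exact ⟨w i, by rw [hgdef]; rfl⟩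
        · rw [hw', Function.update_of_ne hk]
          exact hconj k
      exact Relation.ReflTransGen.head hmove (ih w' hsum' hψ' hconj')

end HumphriesAux

/-- Humphries; conjectured by Gusein-Zade: If two free generating systems
`(ω₁, …, ω_μ)` and `(ω'₁, …, ω'_μ)` of the free group of rank `μ` are componentwise
conjugate, then one is obtained from the other by a finite sequence of the elementary
moves `α_i(j)`, `β_i(j)`. -/
theorem conjugate_free_generating_systems_related_by_moves (μ : ℕ)
    (ω ω' : Fin μ → FreeGroup (Fin μ))
    (hω : ∃ φ : FreeGroup (Fin μ) ≃* FreeGroup (Fin μ), ∀ i, φ (FreeGroup.of i) = ω i)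
    (hω' : ∃ φ : FreeGroup (Fin μ) ≃* FreeGroup (Fin μ), ∀ i, φ (FreeGroup.of i) = ω' i)
    (hconj : ∀ i, IsConj (ω i) (ω' i)) :
    Relation.ReflTransGen (elemConjMove μ) ω ω' := by
  obtain ⟨φ, hφ⟩ := hω
  obtain ⟨φ', hφ'⟩ := hω'
  set w : Fin μ → FreeGroup (Fin μ) := fun i => φ.symm (ω' i) with hw
  have hψ : ∃ ψ : FreeGroup (Fin μ) ≃* FreeGroup (Fin μ), ∀ i, ψ (FreeGroup.of i) = w i :=
    ⟨φ'.trans φ.symm, fun i => by rw [hw, MulEquiv.trans_apply, hφ' i]⟩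
  have hsymmi : ∀ i, φ.symm (ω i) = FreeGroup.of i := fun i => by
    rw [← hφ i, MulEquiv.symm_apply_apply]
  have hconjw : ∀ i, IsConj (FreeGroup.of i) (w i) := fun i => by
    have h := φ.symm.toMonoidHom.map_isConj (hconj i)
    rw [show φ.symm.toMonoidHom (ω i) = φ.symm (ω i) from rfl,
      show φ.symm.toMonoidHom (ω' i) = φ.symm (ω' i) from rfl, hsymmi i] at h
    exact h
  have hchain := HumphriesAux.main_reduction μ (∑ i, FreeGroup.norm (w i)) w le_rfl hψ hconjw
  have hchain2 := Relation.ReflTransGen.lift (fun (v : Fin μ → FreeGroup (Fin μ)) => fun k => φ (v k))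
    (fun a b hab => HumphriesAux.elemConjMove_map φ hab) _ _ hchain
  have h1 : (fun k => φ (w k)) = ω' := by
    funext k
    simp [hw]
  have h2 : (fun k => φ (FreeGroup.of k)) = ω := funext fun k => hφ k
  simp only [Function.onFun] at hchain2
  rw [h1, h2] at hchain2
  haveI : Std.Symm (elemConjMove μ) := ⟨fun a b h => HumphriesAux.elemConjMove_symm h⟩
  exact Std.Symm.symm _ _ hchain2
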